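/- The strain-limiting constitutive map A : ℝ² → ℝ² is a bijection from the Euclidean plane ℝ² onto the open ball of radius 1/(2μβ) centered at the origin; that is, every strain vector ε with ‖ε‖ < 1/(2μβ) arises from exactly one stress vector T via ε = Ψ₁(‖T‖)T, and no strain of norm ≥ 1/(2μβ) is attained. -/

import Mathlib

open RealInnerProductSpace

private lemma aux_forward (μ β α r : ℝ) (hμ : 0 < μ) (hβ : 0 < β) (hα : 0 < α) (hr : 0 ≤ r) :
    2 * μ / (1 - (2 * μ * β * (r / (2 * μ * (1 + (β * r) ^ α) ^ (1 / α)))) ^ α) ^ (1 / α) *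
      (1 / (2 * μ * (1 + (β * r) ^ α) ^ (1 / α))) = 1 := by
  have hu : 0 ≤ (β * r) ^ α := Real.rpow_nonneg (by positivity) α
  have h1u : 0 < 1 + (β * r) ^ α := by linarith
  have hp : 0 < (1 + (β * r) ^ α) ^ (1 / α) := Real.rpow_pos_of_pos h1u _
  have e1 : 2 * μ * β * (r / (2 * μ * (1 + (β * r) ^ α) ^ (1 / α)))
      = β * r / (1 + (β * r) ^ α) ^ (1 / α) := by
    field_simp
  rw [e1]
  have e2 : (β * r / (1 + (β * r) ^ α) ^ (1 / α)) ^ α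
      = (β * r) ^ α / (1 + (β * r) ^ α) := by
    rw [Real.div_rpow (by positivity) hp.le, one_div, Real.rpow_inv_rpow h1u.le hα.ne']
  rw [e2]
  have e3 : 1 - (β * r) ^ α / (1 + (β * r) ^ α) = 1 / (1 + (β * r) ^ α) := by
    field_simp
    ring
  rw [e3]
  have e4 : (1 / (1 + (β * r) ^ α)) ^ (1 / α) = 1 / (1 + (β * r) ^ α) ^ (1 / α) := by
    rw [Real.div_rpow zero_le_one h1u.le, Real.one_rpow]
  rw [e4]
  field_simp

private lemma aux_backward (μ β α s : ℝ) (hμ : 0 < μ) (hβ : 0 < β) (hα : 0 < α)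
    (hs : 0 ≤ s) (hlt : 2 * μ * β * s < 1) :
    1 / (2 * μ * (1 + (β * (2 * μ / (1 - (2 * μ * β * s) ^ α) ^ (1 / α) * s)) ^ α) ^ (1 / α)) *
      (2 * μ / (1 - (2 * μ * β * s) ^ α) ^ (1 / α)) = 1 := by
  have ht0 : 0 ≤ (2 * μ * β * s) ^ α := Real.rpow_nonneg (by positivity) α
  have ht1 : (2 * μ * β * s) ^ α < 1 := Real.rpow_lt_one (by positivity) hlt hα
  have h1t : 0 < 1 - (2 * μ * β * s) ^ α := by linarith
  have hq : 0 < (1 - (2 * μ * β * s) ^ α) ^ (1 / α) := Real.rpow_pos_of_pos h1t _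
  have e1 : β * (2 * μ / (1 - (2 * μ * β * s) ^ α) ^ (1 / α) * s)
      = 2 * μ * β * s / (1 - (2 * μ * β * s) ^ α) ^ (1 / α) := by ring
  rw [e1]
  have e2 : (2 * μ * β * s / (1 - (2 * μ * β * s) ^ α) ^ (1 / α)) ^ α
      = (2 * μ * β * s) ^ α / (1 - (2 * μ * β * s) ^ α) := by
    rw [Real.div_rpow (by positivity) hq.le, one_div, Real.rpow_inv_rpow h1t.le hα.ne']
  rw [e2]
  have e3 : 1 + (2 * μ * β * s) ^ α / (1 - (2 * μ * β * s) ^ α)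
      = 1 / (1 - (2 * μ * β * s) ^ α) := by
    field_simp
    ring
  rw [e3]
  have e4 : (1 / (1 - (2 * μ * β * s) ^ α)) ^ (1 / α)
      = 1 / (1 - (2 * μ * β * s) ^ α) ^ (1 / α) := by
    rw [Real.div_rpow zero_le_one h1t.le, Real.one_rpow]
  rw [e4]
  field_simp

/-- the strain-limiting constitutive map `A` is a bijection from the
Euclidean plane onto the open ball of radius `1/(2μβ)` centered at the origin. -/
theorem strain_limiting_bijection_onto_ball
    (μ β α : ℝ) (hμ : 0 < μ) (hβ : 0 < β) (hα : 0 < α)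
    (A : EuclideanSpace ℝ (Fin 2) → EuclideanSpace ℝ (Fin 2))
    (hA : ∀ ξ, A ξ = (1 / (2 * μ * (1 + (β * ‖ξ‖) ^ α) ^ (1 / α))) • ξ) :
    Set.BijOn A Set.univ (Metric.ball (0 : EuclideanSpace ℝ (Fin 2)) (1 / (2 * μ * β))) := by
  have hnorm : ∀ ξ : EuclideanSpace ℝ (Fin 2),
      ‖A ξ‖ = ‖ξ‖ / (2 * μ * (1 + (β * ‖ξ‖) ^ α) ^ (1 / α)) := by
    intro ξ
    have hu : 0 ≤ (β * ‖ξ‖) ^ α := Real.rpow_nonneg (by positivity) α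
    have h1u : 0 < 1 + (β * ‖ξ‖) ^ α := by linarith
    rw [hA, norm_smul, Real.norm_eq_abs, abs_of_pos (by positivity), one_div, inv_mul_eq_div]
  have hmap : ∀ ξ : EuclideanSpace ℝ (Fin 2),
      A ξ ∈ Metric.ball (0 : EuclideanSpace ℝ (Fin 2)) (1 / (2 * μ * β)) := by
    intro ξ
    rw [Metric.mem_ball, dist_zero_right, hnorm]
    have hu : 0 ≤ (β * ‖ξ‖) ^ α := Real.rpow_nonneg (by positivity) α
    have h1u : 0 < 1 + (β * ‖ξ‖) ^ α := by linarith
    rw [div_lt_div_iff₀ (by positivity) (by positivity)]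
    have h2 : β * ‖ξ‖ < (1 + (β * ‖ξ‖) ^ α) ^ (1 / α) := by
      have h3 := Real.rpow_lt_rpow hu
        (by linarith : (β * ‖ξ‖) ^ α < 1 + (β * ‖ξ‖) ^ α) (by positivity : 0 < 1 / α)
      rw [one_div] at h3 ⊢
      rwa [Real.rpow_rpow_inv (by positivity) hα.ne'] at h3
    calc ‖ξ‖ * (2 * μ * β) = (β * ‖ξ‖) * (2 * μ) := by ring
      _ < ((1 + (β * ‖ξ‖) ^ α) ^ (1 / α)) * (2 * μ) :=
          mul_lt_mul_of_pos_right h2 (by positivity)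
      _ = 1 * (2 * μ * (1 + (β * ‖ξ‖) ^ α) ^ (1 / α)) := by ring
  have hleft : ∀ ξ : EuclideanSpace ℝ (Fin 2),
      (2 * μ / (1 - (2 * μ * β * ‖A ξ‖) ^ α) ^ (1 / α)) • A ξ = ξ := by
    intro ξ
    rw [hnorm ξ, hA ξ, smul_smul, aux_forward μ β α ‖ξ‖ hμ hβ hα (norm_nonneg ξ), one_smul]
  have hright : ∀ ε ∈ Metric.ball (0 : EuclideanSpace ℝ (Fin 2)) (1 / (2 * μ * β)),
      A ((2 * μ / (1 - (2 * μ * β * ‖ε‖) ^ α) ^ (1 / α)) • ε) = ε := by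
    intro ε hε
    rw [Metric.mem_ball, dist_zero_right] at hε
    have h1 : 2 * μ * β * ‖ε‖ < 1 := by
      have h2 := (lt_div_iff₀ (by positivity : (0:ℝ) < 2 * μ * β)).mp hε
      nlinarith
    have ht1 : (2 * μ * β * ‖ε‖) ^ α < 1 := Real.rpow_lt_one (by positivity) h1 hα
    have h1t : 0 < 1 - (2 * μ * β * ‖ε‖) ^ α := by linarith
    have hk : 0 < 2 * μ / (1 - (2 * μ * β * ‖ε‖) ^ α) ^ (1 / α) := by positivity
    rw [hA, norm_smul, Real.norm_eq_abs, abs_of_pos hk, smul_smul,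
      aux_backward μ β α ‖ε‖ hμ hβ hα (norm_nonneg ε) h1, one_smul]
  exact ⟨fun ξ _ => hmap ξ,
    fun x _ y _ h => by rw [← hleft x, h, hleft y],
    fun ε hε => ⟨_, trivial, hright ε hε⟩⟩
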